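/- Let ρ > 1, n ≥ 2 an integer, and α ∈ (0,1)∪(1,∞). Then for every P ∈ P_n(ρ), H_α(P) ≥ log n − [(1/(α−1))·log(1 + (1 + α(ρ−1) − ρ^α)/((1−α)(ρ−1))) − (α/(α−1))·log(1 + (1 + α(ρ−1) − ρ^α)/((1−α)(ρ^α−1)))]. -/

import Mathlib

open Finset

/-- `P` is a probability mass function, strictly positive on `{1,…,n}`. -/
def IsPMF (n : ℕ) (P : ℕ → ℝ) : Prop :=
  (∀ i ∈ Finset.Icc 1 n, 0 < P i) ∧ ∑ i ∈ Finset.Icc 1 n, P i = 1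

/-- The ratio of the maximal to minimal mass of `P` on `{1,…,n}` is at most `ρ`. -/
def RatioBdd (n : ℕ) (ρ : ℝ) (P : ℕ → ℝ) : Prop :=
  ∀ i ∈ Finset.Icc 1 n, ∀ j ∈ Finset.Icc 1 n, P i ≤ ρ * P j

/-- `P` is nonincreasing on `{1,…,n}`. -/
def DecOn (n : ℕ) (P : ℕ → ℝ) : Prop :=
  ∀ i ∈ Finset.Icc 1 n, ∀ j ∈ Finset.Icc 1 n, i ≤ j → P j ≤ P i

/-- Sum of the `k` largest masses of `P` on `{1,…,n}`. -/
noncomputable def topSum (n : ℕ) (P : ℕ → ℝ) (k : ℕ) : ℝ :=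
  sSup ((fun s : Finset ℕ => ∑ i ∈ s, P i) '' {s | s ⊆ Finset.Icc 1 n ∧ s.card = k})

/-- `P ≺ Q`: `P` is majorized by `Q`, both viewed on `{1,…,n}`. -/
def MajorizedBy (n : ℕ) (P Q : ℕ → ℝ) : Prop :=
  ∀ k, 1 ≤ k → k ≤ n - 1 → topSum n P k ≤ topSum n Q k

/-- Zero-padding of a pmf on `{1,…,m}` outside of `{1,…,m}`. -/
def padTo (m : ℕ) (Q : ℕ → ℝ) : ℕ → ℝ := fun i => if i ≤ m then Q i else 0

/-- Rényi entropy of order `α` of `P` on `{1,…,n}` (Shannon entropy for `α = 1`);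
natural logarithms. -/
noncomputable def renyiH (n : ℕ) (α : ℝ) (P : ℕ → ℝ) : ℝ :=
  if α = 1 then -∑ i ∈ Finset.Icc 1 n, P i * Real.log (P i)
  else (1 - α)⁻¹ * Real.log (∑ i ∈ Finset.Icc 1 n, P i ^ α)

/-- `c_α^{(n)}(ρ) = log n − min_{P ∈ 𝒫_n(ρ)} H_α(P)` for `n ≥ 2`, and `0` for `n ≤ 1`. -/
noncomputable def cN (α ρ : ℝ) (n : ℕ) : ℝ :=
  if n ≤ 1 then 0
  else Real.log n - sInf (renyiH n α '' {P | IsPMF n P ∧ RatioBdd n ρ P})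

/-- The closed-form expression for `c_α^{(∞)}(ρ)`, `α ∈ (0,1) ∪ (1,∞)`. -/
noncomputable def cInfinity (α ρ : ℝ) : ℝ :=
  (α - 1)⁻¹ * Real.log (1 + (1 + α * (ρ - 1) - ρ ^ α) / ((1 - α) * (ρ - 1)))
    - α / (α - 1) * Real.log (1 + (1 + α * (ρ - 1) - ρ ^ α) / ((1 - α) * (ρ ^ α - 1)))

/-- `v(α) := c_α^{(∞)}(2)`, with the continuous extension at `α = 1`. -/
noncomputable def vFun (α : ℝ) : ℝ :=
  if α = 1 then Real.log (2 / (Real.exp 1 * Real.log 2))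
  else Real.log ((α - 1) / ((2 : ℝ) ^ α - 2)) - α / (α - 1) * Real.log (α / ((2 : ℝ) ^ α - 1))

/-- `n*`: the maximal `i ∈ {1,…,m−1}` with `P i ≥ (m−i)⁻¹ ∑_{j=i+1}^n P j`. -/
noncomputable def nStar (n m : ℕ) (P : ℕ → ℝ) : ℕ :=
  sSup {i : ℕ | 1 ≤ i ∧ i ≤ m - 1 ∧
    ((m : ℝ) - (i : ℝ))⁻¹ * ∑ j ∈ Finset.Icc (i + 1) n, P j ≤ P i}

/-- The pmf of `X̃_m` on `{1,…,m}`, built from a nonincreasing pmf `P` on `{1,…,n}`. -/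
noncomputable def tildeX (n m : ℕ) (P : ℕ → ℝ) : ℕ → ℝ := fun i =>
  if P 1 < 1 / (m : ℝ) then 1 / (m : ℝ)
  else if i ≤ nStar n m P then P i
  else ((m : ℝ) - (nStar n m P : ℝ))⁻¹ * ∑ j ∈ Finset.Icc (nStar n m P + 1) n, P j

/-- The pmf of `Ỹ_m` on `{1,…,m}`. -/
def tildeY (n m : ℕ) (P : ℕ → ℝ) : ℕ → ℝ := fun i =>
  if i = 1 then ∑ j ∈ Finset.Icc 1 (n - m + 1), P j else P (n - m + i)

/-- The pmf of `f(X)`: `(push n f P) j = ∑_{i ∈ {1,…,n}, f i = j} P i`. -/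
def push (n : ℕ) (f : ℕ → ℕ) (P : ℕ → ℝ) : ℕ → ℝ := fun j =>
  ∑ i ∈ (Finset.Icc 1 n).filter (fun i => f i = j), P i

/-- The set `{1,…,n}^k` of source sequences of length `k`. -/
def seqSet (n k : ℕ) : Finset (Fin k → ℕ) := Fintype.piFinset fun _ => Finset.Icc 1 n

/-- Product (i.i.d.) probability of a sequence. -/
def prodP (k : ℕ) (P : ℕ → ℝ) (x : Fin k → ℕ) : ℝ := ∏ i, P (x i)

/-- `g` is a ranking function for the i.i.d. vector on `{1,…,n}^k` with marginal `P`: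
a bijection onto `{1,…,n^k}` which assigns smaller ranks to larger masses. -/
def IsRanking (n k : ℕ) (P : ℕ → ℝ) (g : (Fin k → ℕ) → ℕ) : Prop :=
  Set.BijOn g (↑(seqSet n k)) (Set.Icc 1 (n ^ k)) ∧
    ∀ x ∈ seqSet n k, ∀ y ∈ seqSet n k, prodP k P y < prodP k P x → g x < g y

/-- The `ρ`-th guessing moment `E[g(Z^k)^ρ]`. -/
noncomputable def gmoment (n k : ℕ) (P : ℕ → ℝ) (g : (Fin k → ℕ) → ℕ) (ρ : ℝ) : ℝ :=
  ∑ x ∈ seqSet n k, prodP k P x * (g x : ℝ) ^ ρ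

/-- Kraft inequality for a `D`-ary length function on `{1,…,n}^k`. -/
def Kraft (n k D : ℕ) (ℓ : (Fin k → ℕ) → ℕ) : Prop :=
  ∑ x ∈ seqSet n k, (D : ℝ) ^ (-(ℓ x : ℝ)) ≤ 1

/-- Scaled cumulant generating function `Λ_k(ρ)` of the codeword lengths (base-`D` log). -/
noncomputable def cgf (n k D : ℕ) (P : ℕ → ℝ) (ℓ : (Fin k → ℕ) → ℕ) (ρ : ℝ) : ℝ :=
  (1 / (k : ℝ)) * Real.logb D (∑ x ∈ seqSet n k, prodP k P x * (D : ℝ) ^ (ρ * (ℓ x : ℝ)))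

/-- `i_β` of Lemma 2. -/
noncomputable def iBeta (n : ℕ) (ρ β : ℝ) : ℕ := Nat.floor ((1 - (n : ℝ) * β) / ((ρ - 1) * β))

/-- The pmf `Q_β` of Lemma 2. -/
noncomputable def Qbeta (n : ℕ) (ρ β : ℝ) : ℕ → ℝ := fun j =>
  if j ≤ iBeta n ρ β then ρ * β
  else if j = iBeta n ρ β + 1 then
    1 - ((n : ℝ) + (iBeta n ρ β : ℝ) * ρ - (iBeta n ρ β : ℝ) - 1) * β
  else β

set_option maxHeartbeats 1000000 in
lemma young_gt {α t : ℝ} (hα : 1 < α) (ht : 0 ≤ t) :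
    t ^ (α - 1) ≤ (α - 1) / α * t ^ α + 1 / α := by
  have hα0 : (0:ℝ) < α := by linarith
  have h : (t^α)^((α-1)/α) * (1:ℝ)^((1:ℝ)/α) ≤ (α-1)/α * (t^α) + (1/α) * 1 :=
    Real.geom_mean_le_arith_mean2_weighted (by apply div_nonneg <;> linarith)
      (by positivity) (Real.rpow_nonneg ht α) zero_le_one (by field_simp; ring)
  have h2 : (t ^ α) ^ ((α-1)/α) = t ^ (α - 1) := by
    rw [← Real.rpow_mul ht]; congr 1; field_simp
  rw [h2, Real.one_rpow, mul_one, mul_one] at h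
  linarith

lemma young_lt {α t : ℝ} (hα0 : 0 < α) (hα : α < 1) (ht : 0 < t) :
    (1:ℝ) ≤ α * t ^ (α - 1) + (1 - α) * t ^ α := by
  have h : (t^(α-1))^α * (t^α)^(1-α) ≤ α * (t^(α-1)) + (1-α) * (t^α) :=
    Real.geom_mean_le_arith_mean2_weighted hα0.le (by linarith)
      (Real.rpow_nonneg ht.le (α-1)) (Real.rpow_nonneg ht.le α) (by ring)
  have h2 : (t ^ (α-1)) ^ α * (t ^ α) ^ (1 - α) = 1 := by
    rw [← Real.rpow_mul ht.le, ← Real.rpow_mul ht.le, ← Real.rpow_add ht,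
      show (α-1)*α + α*(1-α) = 0 by ring, Real.rpow_zero]
  linarith [h2 ▸ h]

lemma chord_le {f : ℝ → ℝ} (hconv : ConvexOn ℝ (Set.Ici 0) f) {m M x : ℝ}
    (hm : 0 ≤ m) (hmM : m < M) (hx1 : m ≤ x) (hx2 : x ≤ M) :
    f x ≤ f m + (f M - f m) / (M - m) * (x - m) := by
  have hMm : (0:ℝ) < M - m := by linarith
  have h := hconv.2 (Set.mem_Ici.2 hm) (Set.mem_Ici.2 (by linarith : (0:ℝ) ≤ M))
    (show (0:ℝ) ≤ (M-x)/(M-m) from div_nonneg (by linarith) hMm.le)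
    (show (0:ℝ) ≤ (x-m)/(M-m) from div_nonneg (by linarith) hMm.le)
    (by field_simp; ring)
  rw [smul_eq_mul, smul_eq_mul, smul_eq_mul, smul_eq_mul] at h
  have hc : (M-x)/(M-m) * m + (x-m)/(M-m) * M = x := by field_simp [hMm.ne']; ring
  rw [hc] at h
  have h2 : (M-x)/(M-m) * f m + (x-m)/(M-m) * f M
      = f m + (f M - f m)/(M-m) * (x-m) := by field_simp [hMm.ne']; ring
  linarith [h2 ▸ h]

lemma chord_ge {f : ℝ → ℝ} (hconc : ConcaveOn ℝ (Set.Ici 0) f) {m M x : ℝ}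
    (hm : 0 ≤ m) (hmM : m < M) (hx1 : m ≤ x) (hx2 : x ≤ M) :
    f m + (f M - f m) / (M - m) * (x - m) ≤ f x := by
  have h := chord_le (f := fun y => -f y) hconc.neg hm hmM hx1 hx2
  simp only [neg_sub_neg] at h
  have hMm : (0:ℝ) < M - m := by linarith
  have h2 : (f m - f M)/(M-m) = -((f M - f m)/(M-m)) := by ring
  rw [h2] at h; linarith

set_option maxHeartbeats 1000000 in
theorem stmt8_aux (n : ℕ) (hn : 2 ≤ n) (ρ α : ℝ) (hρ : 1 < ρ) (hα : 0 < α) (hα1 : α ≠ 1)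
    (P : ℕ → ℝ) (hpos : ∀ i ∈ Finset.Icc 1 n, 0 < P i)
    (hsum : ∑ i ∈ Finset.Icc 1 n, P i = 1)
    (hPρ : ∀ i ∈ Finset.Icc 1 n, ∀ j ∈ Finset.Icc 1 n, P i ≤ ρ * P j) :
    Real.log n - cInfinity α ρ ≤ renyiH n α P := by
  have hne : (Finset.Icc 1 n).Nonempty := ⟨1, by simp; omega⟩
  have hcard : (Finset.Icc 1 n).card = n := by simp
  -- basic positivity
  have hρ0 : (0:ℝ) < ρ := by linarith
  have hρ1 : ρ - 1 ≠ 0 := by intro h; linarith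
  have hα1' : α - 1 ≠ 0 := sub_ne_zero.2 hα1
  have h1α : (1:ℝ) - α ≠ 0 := by intro h; apply hα1'; linarith
  have hρα1 : 1 < ρ ^ α := (Real.one_lt_rpow_iff_of_pos hρ0).2 (Or.inl ⟨hρ, hα⟩)
  set c : ℝ := (ρ ^ α - 1) / (ρ - 1) with hc_def
  have hc : 0 < c := div_pos (by linarith) (by linarith)
  have hρα : ρ = ρ ^ (1:ℝ) := (Real.rpow_one ρ).symm
  -- sign of c - 1 matches sign of α - 1
  have hcsign : 0 < (c - 1) / (α - 1) := by
    rcases lt_or_gt_of_ne hα1 with h | h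
    · have : ρ ^ α < ρ := by
        nth_rewrite 2 [hρα]; exact Real.rpow_lt_rpow_left_iff hρ |>.2 h
      apply div_pos_of_neg_of_neg
      · rw [hc_def]; rw [div_sub_one hρ1]; apply div_neg_of_neg_of_pos <;> linarith
      · linarith
    · have : ρ < ρ ^ α := by
        nth_rewrite 1 [hρα]; exact Real.rpow_lt_rpow_left_iff hρ |>.2 h
      apply div_pos
      · rw [hc_def, div_sub_one hρ1]; apply div_pos <;> linarith
      · linarith
  set u : ℝ := (c - 1) / (α - 1) with hu_def
  have hu : 0 < u := hcsign
  have hn0 : (0:ℝ) < (n:ℝ) := by positivity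
  set K : ℝ := (n:ℝ) * u * α / c with hK_def
  have hK : 0 < K := by positivity
  -- the minimum m
  set m : ℝ := (Finset.Icc 1 n).inf' hne P with hm_def
  have hm : 0 < m := by
    rw [hm_def, Finset.lt_inf'_iff]; exact hpos
  have hmle : ∀ i ∈ Finset.Icc 1 n, m ≤ P i := fun i hi => Finset.inf'_le P hi
  obtain ⟨j₀, hj₀, hj₀eq⟩ := Finset.exists_mem_eq_inf' hne P
  have hleM : ∀ i ∈ Finset.Icc 1 n, P i ≤ ρ * m := by
    intro i hi; rw [hm_def, hj₀eq]; exact hPρ i hi j₀ hj₀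
  have hmM : m < ρ * m := by nlinarith
  -- slope of the chord
  have hm1 : m ^ (α - 1) = m ^ α / m := by rw [Real.rpow_sub hm, Real.rpow_one]
  have hslope : ((ρ*m) ^ α - m ^ α) / (ρ*m - m) = c * m ^ (α-1) := by
    have hd : ρ*m - m ≠ 0 := sub_ne_zero.2 hmM.ne'
    have hd2 : (ρ-1) * m ≠ 0 := mul_ne_zero hρ1 hm.ne'
    rw [Real.mul_rpow hρ0.le hm.le, hm1, hc_def, div_mul_div_comm,
      div_eq_div_iff hd hd2]
    ring
  have hmα : 0 < m ^ α := Real.rpow_pos_of_pos hm α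
  -- the sum of the chord values
  have hsum2 : ∑ i ∈ Finset.Icc 1 n, (m ^ α + c * m ^ (α-1) * (P i - m))
      = c * m ^ (α-1) - (n:ℝ) * (c-1) * m ^ α := by
    rw [Finset.sum_add_distrib, Finset.sum_const, ← Finset.mul_sum,
      Finset.sum_sub_distrib, hsum, Finset.sum_const, hcard]
    have hmm : m ^ (α-1) * m = m ^ α := by rw [hm1]; field_simp
    rw [nsmul_eq_mul, nsmul_eq_mul]
    linear_combination (-((n:ℝ) * c)) * hmm
  -- Young step setup
  have e1 : K ^ ((1:ℝ)-α) * K ^ (α-1) = 1 := by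
    rw [← Real.rpow_add hK]; norm_num
  have e2 : K ^ ((1:ℝ)-α) * K ^ α = K := by
    rw [← Real.rpow_add hK]; norm_num
  have e3 : c * K * (α-1) / α = (n:ℝ) * (c-1) := by
    rw [hK_def, hu_def]; field_simp
  have hKm : (0:ℝ) < K * m := by positivity
  have hKm1 : (K*m) ^ (α-1) = K ^ (α-1) * m ^ (α-1) := Real.mul_rpow hK.le hm.le
  have hKmα : (K*m) ^ α = K ^ α * m ^ α := Real.mul_rpow hK.le hm.le
  have hid : c * m ^ (α-1) - (n:ℝ) * (c-1) * m ^ α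
      = (c * K ^ ((1:ℝ)-α)) * ((K*m) ^ (α-1) - (α-1)/α * (K*m) ^ α) := by
    rw [hKm1, hKmα]
    linear_combination (-(c * m ^ (α-1))) * e1 + (c*(α-1)/α * m ^ α) * e2
      + (m ^ α) * e3
  set B : ℝ := c * K ^ ((1:ℝ)-α) / α with hB_def
  have hB : 0 < B := by positivity
  have hcK : (0:ℝ) < c * K ^ ((1:ℝ)-α) := by positivity
  set S : ℝ := ∑ i ∈ Finset.Icc 1 n, P i ^ α with hS_def
  have hSpos : 0 < S := Finset.sum_pos (fun i hi => Real.rpow_pos_of_pos (hpos i hi) α) hne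
  -- key bound, by cases on α
  have hkey : (α < 1 → B ≤ S) ∧ (1 < α → S ≤ B) := by
    constructor
    · intro hαlt
      have hchord : ∀ i ∈ Finset.Icc 1 n,
          m ^ α + c * m ^ (α-1) * (P i - m) ≤ P i ^ α := by
        intro i hi
        have := chord_ge (Real.concaveOn_rpow hα.le hαlt.le) hm.le hmM (hmle i hi) (hleM i hi)
        rw [hslope] at this; exact this
      have hS1 : c * m ^ (α-1) - (n:ℝ) * (c-1) * m ^ α ≤ S := by
        rw [← hsum2, hS_def]; exact Finset.sum_le_sum hchord
      have hy := young_lt hα hαlt hKm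
      have hy2 : 1/α ≤ (K*m) ^ (α-1) - (α-1)/α * (K*m) ^ α := by
        rw [div_le_iff₀ hα]
        have expand : ((K*m) ^ (α-1) - (α-1)/α * (K*m) ^ α) * α
            = α * (K*m) ^ (α-1) + (1-α) * (K*m) ^ α := by field_simp; ring
        rw [expand]; exact hy
      have : B ≤ c * m ^ (α-1) - (n:ℝ) * (c-1) * m ^ α := by
        rw [hid, hB_def]
        calc c * K ^ ((1:ℝ)-α) / α = (c * K ^ ((1:ℝ)-α)) * (1/α) := by ring
        _ ≤ _ := mul_le_mul_of_nonneg_left hy2 hcK.le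
      linarith
    · intro hαgt
      have hchord : ∀ i ∈ Finset.Icc 1 n,
          P i ^ α ≤ m ^ α + c * m ^ (α-1) * (P i - m) := by
        intro i hi
        have := chord_le (convexOn_rpow hαgt.le) hm.le hmM (hmle i hi) (hleM i hi)
        rw [hslope] at this; exact this
      have hS1 : S ≤ c * m ^ (α-1) - (n:ℝ) * (c-1) * m ^ α := by
        rw [← hsum2, hS_def]; exact Finset.sum_le_sum hchord
      have hy := young_gt hαgt hKm.le
      have hy2 : (K*m) ^ (α-1) - (α-1)/α * (K*m) ^ α ≤ 1/α := by linarith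
      have : c * m ^ (α-1) - (n:ℝ) * (c-1) * m ^ α ≤ B := by
        rw [hid, hB_def]
        calc (c * K ^ ((1:ℝ)-α)) * ((K*m) ^ (α-1) - (α-1)/α * (K*m) ^ α)
            ≤ (c * K ^ ((1:ℝ)-α)) * (1/α) := mul_le_mul_of_nonneg_left hy2 hcK.le
        _ = c * K ^ ((1:ℝ)-α) / α := by ring
      linarith
  -- identify (1-α)⁻¹ log B with log n - cInfinity
  have hρα1' : ρ ^ α - 1 ≠ 0 := by intro h; linarith
  have h1A : 1 + (1 + α * (ρ - 1) - ρ ^ α) / ((1 - α) * (ρ - 1)) = u := by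
    rw [hu_def, hc_def]; field_simp; ring
  have h1B : 1 + (1 + α * (ρ - 1) - ρ ^ α) / ((1 - α) * (ρ ^ α - 1)) = α * u / c := by
    rw [hu_def, hc_def]; field_simp; ring
  have hlogK : Real.log K = Real.log n + Real.log u + Real.log α - Real.log c := by
    rw [hK_def, Real.log_div (by positivity) hc.ne', Real.log_mul (by positivity) hα.ne',
      Real.log_mul hn0.ne' hu.ne']
  have hlogB : Real.log B = Real.log c + (1-α) * Real.log K - Real.log α := by
    rw [hB_def, Real.log_div (by positivity) hα.ne',
      Real.log_mul hc.ne' (Real.rpow_pos_of_pos hK _).ne', Real.log_rpow hK]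
  have hlogαuc : Real.log (α * u / c) = Real.log α + Real.log u - Real.log c := by
    rw [Real.log_div (by positivity) hc.ne', Real.log_mul hα.ne' hu.ne']
  have hfinal : (1-α)⁻¹ * Real.log B = Real.log n - cInfinity α ρ := by
    rw [cInfinity, h1A, h1B, hlogB, hlogK, hlogαuc]
    field_simp
    ring
  -- conclude
  rw [renyiH, if_neg hα1, ← hS_def, ← hfinal]
  rcases lt_or_gt_of_ne hα1 with h | h
  · have h1 : (0:ℝ) < (1-α)⁻¹ := by
      apply inv_pos.2; linarith
    exact mul_le_mul_of_nonneg_left (Real.log_le_log hB (hkey.1 h)) h1.le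
  · have h1 : (1-α)⁻¹ ≤ 0 := by
      apply inv_nonpos.2; linarith
    exact mul_le_mul_of_nonpos_left (Real.log_le_log hSpos (hkey.2 h)) h1


theorem stmt8 (n : ℕ) (hn : 2 ≤ n) (ρ α : ℝ) (hρ : 1 < ρ) (hα : 0 < α) (hα1 : α ≠ 1)
    (P : ℕ → ℝ) (hP : IsPMF n P) (hPρ : RatioBdd n ρ P) :
    Real.log n - cInfinity α ρ ≤ renyiH n α P :=
  stmt8_aux n hn ρ α hρ hα hα1 P hP.1 hP.2 hPρ
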